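/- Let β > 0 and let m̃_β be the probability measure on the open unit disc 𝔻 with density β(1−|z|²)^{β−1} with respect to normalized area measure. Then there exist constants c, C > 0 depending only on β such that for all 0 < ε ≤ 1, c · ε^{β + 1/2} ≤ m̃_β({z ∈ 𝔻 : Re(1−z) < ε}) ≤ C · ε^{β + 1/2}. -/

import Mathlib

open MeasureTheory

open Set in

private lemma lint_rpow_right {p : ℝ} (c d : ℝ) (hp : -1 < p) (h : c ≤ d) :
    ∫⁻ y in Set.Ioo c d, ENNReal.ofReal ((d - y) ^ p) =
      ENNReal.ofReal ((d - c) ^ (p+1) / (p+1)) := by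
  have hint : IntervalIntegrable (fun y => (d - y) ^ p) volume c d := by
    have := (intervalIntegral.intervalIntegrable_rpow' (a := d - d) (b := d - c) hp)
    have h2 := this.comp_sub_left d
    simpa using h2.symm
  have hIoo : IntegrableOn (fun y => (d - y) ^ p) (Set.Ioo c d) volume := by
    exact hint.1.mono_set Set.Ioo_subset_Ioc_self
  rw [← ofReal_integral_eq_lintegral_ofReal hIoo]
  · congr 1
    rw [← integral_Ioc_eq_integral_Ioo, ← intervalIntegral.integral_of_le h,
      intervalIntegral.integral_comp_sub_left (fun x => x ^ p) d]
    simp only [sub_self]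
    rw [integral_rpow (Or.inl hp)]
    rw [Real.zero_rpow (by linarith)]
    ring
  · filter_upwards [ae_restrict_mem measurableSet_Ioo] with y hy
    exact Real.rpow_nonneg (by linarith [hy.2]) p

private lemma lint_rpow_left {p : ℝ} (c d : ℝ) (hp : -1 < p) (h : c ≤ d) :
    ∫⁻ y in Set.Ioo c d, ENNReal.ofReal ((y - c) ^ p) =
      ENNReal.ofReal ((d - c) ^ (p+1) / (p+1)) := by
  have hint : IntervalIntegrable (fun y => (y - c) ^ p) volume c d := by
    have := (intervalIntegral.intervalIntegrable_rpow' (a := c - c) (b := d - c) hp)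
    have h2 := this.comp_sub_right c
    simpa using h2
  have hIoo : IntegrableOn (fun y => (y - c) ^ p) (Set.Ioo c d) volume := by
    exact hint.1.mono_set Set.Ioo_subset_Ioc_self
  rw [← ofReal_integral_eq_lintegral_ofReal hIoo]
  · congr 1
    rw [← integral_Ioc_eq_integral_Ioo, ← intervalIntegral.integral_of_le h,
      intervalIntegral.integral_comp_sub_right (fun x => x ^ p) c]
    simp only [sub_self]
    rw [integral_rpow (Or.inl hp)]
    rw [Real.zero_rpow (by linarith)]
    ring
  · filter_upwards [ae_restrict_mem measurableSet_Ioo] with y hy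
    exact Real.rpow_nonneg (by linarith [hy.1]) p

-- pointwise upper bound
private lemma ptw_upper {β a y : ℝ} (hβ : 0 < β) (ha : 0 < a) (hy : y ∈ Set.Ioo (-a) a) :
    (a^2 - y^2) ^ (β-1) ≤
      (max 1 (2^(β-1)) * a^(β-1)) * ((a-y)^(β-1) + (a+y)^(β-1)) := by
  obtain ⟨hy1, hy2⟩ := hy
  have h1 : 0 < a - y := by linarith
  have h2 : 0 < a + y := by linarith
  have hfac : a^2 - y^2 = (a-y)*(a+y) := by ring
  rw [hfac, Real.mul_rpow h1.le h2.le]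
  set M := max 1 (2^(β-1):ℝ) with hM
  have hM1 : (1:ℝ) ≤ M := le_max_left _ _
  have hplus : 0 ≤ (a+y)^(β-1) := Real.rpow_nonneg h2.le _
  have hminus : 0 ≤ (a-y)^(β-1) := Real.rpow_nonneg h1.le _
  rcases le_or_gt 1 β with hb | hb
  · -- β ≥ 1 : (a+y)^(β-1) ≤ (2a)^(β-1) = 2^(β-1) a^(β-1) ≤ M a^(β-1)
    have : (a+y)^(β-1) ≤ M * a^(β-1) := by
      have h3 : (a+y)^(β-1) ≤ (2*a)^(β-1) :=
        Real.rpow_le_rpow h2.le (by linarith) (by linarith)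
      rw [Real.mul_rpow (by norm_num) ha.le] at h3
      calc (a+y)^(β-1) ≤ 2^(β-1) * a^(β-1) := h3
        _ ≤ M * a^(β-1) := by
            apply mul_le_mul_of_nonneg_right (le_max_right _ _) (Real.rpow_nonneg ha.le _)
    nlinarith [Real.rpow_nonneg ha.le (β-1), mul_le_mul_of_nonneg_left this hminus]
  · rcases le_or_gt 0 y with hy0 | hy0
    · -- (a+y)^(β-1) ≤ a^(β-1)
      have : (a+y)^(β-1) ≤ a^(β-1) :=
        Real.rpow_le_rpow_of_nonpos ha (by linarith) (by linarith)
      have h4 : (a-y)^(β-1) * (a+y)^(β-1) ≤ a^(β-1) * (a-y)^(β-1) := by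
        nlinarith
      have key : 0 ≤ (M-1) * (a^(β-1) * ((a-y)^(β-1)+(a+y)^(β-1))) :=
        mul_nonneg (by linarith) (mul_nonneg (Real.rpow_nonneg ha.le _) (add_nonneg hminus hplus))
      nlinarith [mul_nonneg (Real.rpow_nonneg ha.le (β-1)) hplus]
    · have : (a-y)^(β-1) ≤ a^(β-1) :=
        Real.rpow_le_rpow_of_nonpos ha (by linarith) (by linarith)
      have h4 : (a-y)^(β-1) * (a+y)^(β-1) ≤ a^(β-1) * (a+y)^(β-1) := by
        nlinarith
      have key : 0 ≤ (M-1) * (a^(β-1) * ((a-y)^(β-1)+(a+y)^(β-1))) :=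
        mul_nonneg (by linarith) (mul_nonneg (Real.rpow_nonneg ha.le _) (add_nonneg hminus hplus))
      nlinarith [mul_nonneg (Real.rpow_nonneg ha.le (β-1)) hminus]

-- pointwise lower bound
private lemma ptw_lower {β a y : ℝ} (hβ : 0 < β) (ha : 0 < a) (hy : y ∈ Set.Ioo (-(a/2)) (a/2)) :
    min 1 ((3/4 : ℝ)^(β-1)) * (a^2)^(β-1) ≤ (a^2 - y^2) ^ (β-1) := by
  obtain ⟨hy1, hy2⟩ := hy
  have hya : y^2 ≤ (a/2)^2 := by nlinarith
  have h1 : (3/4) * a^2 ≤ a^2 - y^2 := by nlinarith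
  have h2 : a^2 - y^2 ≤ a^2 := by nlinarith
  have h0 : (0:ℝ) < (3/4) * a^2 := by positivity
  set m := min 1 ((3/4 : ℝ)^(β-1)) with hm
  rcases le_or_gt 1 β with hb | hb
  · calc m * (a^2)^(β-1) ≤ (3/4:ℝ)^(β-1) * (a^2)^(β-1) := by
          apply mul_le_mul_of_nonneg_right (min_le_right _ _) (Real.rpow_nonneg (by positivity) _)
      _ = ((3/4) * a^2)^(β-1) := (Real.mul_rpow (by norm_num) (by positivity)).symm
      _ ≤ (a^2 - y^2)^(β-1) := Real.rpow_le_rpow h0.le h1 (by linarith)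
  · calc m * (a^2)^(β-1) ≤ 1 * (a^2)^(β-1) := by
          apply mul_le_mul_of_nonneg_right (min_le_left _ _) (Real.rpow_nonneg (by positivity) _)
      _ = (a^2)^(β-1) := one_mul _
      _ ≤ (a^2 - y^2)^(β-1) := Real.rpow_le_rpow_of_nonpos (by linarith) h2 (by linarith)

private lemma inner_bd (β : ℝ) (hβ : 0 < β) :
    ∃ k₁ k₂ : ℝ, 0 < k₁ ∧ 0 < k₂ ∧ ∀ x : ℝ, x ∈ Set.Ioo (0:ℝ) 1 →
      ENNReal.ofReal (k₁ * (1-x)^(β-1/2)) ≤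
        (∫⁻ y in Set.Ioo (-(Real.sqrt (1-x^2))) (Real.sqrt (1-x^2)),
          ENNReal.ofReal (β * (1 - (x^2+y^2))^(β-1) / Real.pi)) ∧
      (∫⁻ y in Set.Ioo (-(Real.sqrt (1-x^2))) (Real.sqrt (1-x^2)),
          ENNReal.ofReal (β * (1 - (x^2+y^2))^(β-1) / Real.pi)) ≤
        ENNReal.ofReal (k₂ * (1-x)^(β-1/2)) := by
  have hπ := Real.pi_pos
  set M := max 1 ((2:ℝ)^(β-1)) with hMdef
  set M₂ := max 1 ((2:ℝ)^(β-1/2)) with hM2def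
  set m := min 1 ((3/4:ℝ)^(β-1)) with hmdef
  set m₂ := min 1 ((2:ℝ)^(β-1/2)) with hm2def
  have hM : 0 < M := lt_of_lt_of_le one_pos (le_max_left _ _)
  have hM2 : 0 < M₂ := lt_of_lt_of_le one_pos (le_max_left _ _)
  have hm : 0 < m := lt_min one_pos (Real.rpow_pos_of_pos (by norm_num) _)
  have hm2 : 0 < m₂ := lt_min one_pos (Real.rpow_pos_of_pos (by norm_num) _)
  refine ⟨β * m * m₂ / Real.pi, 2 * 2^(β:ℝ) * M * M₂ / Real.pi, by positivity, by positivity,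
    fun x hx => ?_⟩
  obtain ⟨hx0, hx1⟩ := hx
  have hx2 : 0 < 1 - x^2 := by nlinarith
  set a := Real.sqrt (1-x^2) with hadef
  have ha : 0 < a := Real.sqrt_pos.mpr hx2
  have ha2 : a^2 = 1 - x^2 := Real.sq_sqrt hx2.le
  have hs12 : a = (1-x^2)^(1/2:ℝ) := by rw [hadef, Real.sqrt_eq_rpow]
  have hrw : ∀ y : ℝ, 1 - (x^2+y^2) = a^2 - y^2 := by intro y; rw [ha2]; ring
  have hsplit : ∀ q : ℝ, (1-x^2:ℝ)^(q:ℝ) = (1-x)^(q:ℝ) * (1+x)^(q:ℝ) := by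
    intro q
    rw [show (1-x^2:ℝ) = (1-x)*(1+x) by ring, Real.mul_rpow (by linarith) (by linarith)]
  -- rpow algebra
  have haa : (a^2:ℝ)^(β-1:ℝ) * a = (1-x)^(β-1/2:ℝ) * (1+x)^(β-1/2:ℝ) := by
    rw [ha2]
    rw [hs12]
    rw [← Real.rpow_add hx2, show β - 1 + 1/2 = β - 1/2 by ring, hsplit]
  have he3 : a^(β-1:ℝ) * a^(β:ℝ) = (1-x)^(β-1/2:ℝ) * (1+x)^(β-1/2:ℝ) := by
    rw [hs12, ← Real.rpow_mul hx2.le, ← Real.rpow_mul hx2.le, ← Real.rpow_add hx2,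
      show 1/2*(β-1) + 1/2*β = β - 1/2 by ring, hsplit]
  have hupx : (1+x)^(β-1/2:ℝ) ≤ M₂ := by
    rcases le_or_gt 0 (β-1/2) with hb | hb
    · calc (1+x)^(β-1/2:ℝ) ≤ (2:ℝ)^(β-1/2:ℝ) :=
          Real.rpow_le_rpow (by linarith) (by linarith) hb
        _ ≤ M₂ := le_max_right _ _
    · calc (1+x)^(β-1/2:ℝ) ≤ (1:ℝ)^(β-1/2:ℝ) :=
          Real.rpow_le_rpow_of_nonpos one_pos (by linarith) hb.le
        _ = 1 := Real.one_rpow _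
        _ ≤ M₂ := le_max_left _ _
  have hlox : m₂ ≤ (1+x)^(β-1/2:ℝ) := by
    rcases le_or_gt 0 (β-1/2) with hb | hb
    · calc m₂ ≤ 1 := min_le_left _ _
        _ = (1:ℝ)^(β-1/2:ℝ) := (Real.one_rpow _).symm
        _ ≤ (1+x)^(β-1/2:ℝ) := Real.rpow_le_rpow (by norm_num) (by linarith) hb
    · calc m₂ ≤ (2:ℝ)^(β-1/2:ℝ) := min_le_right _ _
        _ ≤ (1+x)^(β-1/2:ℝ) :=
          Real.rpow_le_rpow_of_nonpos (by linarith) (by linarith) hb.le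
  have hmeas : Measurable (fun y : ℝ => ENNReal.ofReal (β * (1 - (x^2+y^2))^(β-1) / Real.pi)) := by
    fun_prop
  have h1mx : (0:ℝ) ≤ (1-x)^(β-1/2:ℝ) := Real.rpow_nonneg (by linarith) _
  constructor
  · -- LOWER BOUND
    have hsub : Set.Ioo (-(a/2)) (a/2) ⊆ Set.Ioo (-a) a :=
      Set.Ioo_subset_Ioo (by linarith) (by linarith)
    calc ENNReal.ofReal (β * m * m₂ / Real.pi * (1-x)^(β-1/2))
        ≤ ENNReal.ofReal (β * (m * (a^2:ℝ)^(β-1:ℝ)) / Real.pi * a) := by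
          apply ENNReal.ofReal_le_ofReal
          have e : β * (m * (a^2:ℝ)^(β-1:ℝ)) / Real.pi * a
              = (β * m / Real.pi) * ((a^2:ℝ)^(β-1:ℝ) * a) := by ring
          rw [e, haa]
          have hc : (0:ℝ) ≤ β * m / Real.pi := by positivity
          calc β * m * m₂ / Real.pi * (1-x)^(β-1/2)
              = (β * m / Real.pi) * ((1-x)^(β-1/2) * m₂) := by ring
            _ ≤ (β * m / Real.pi) * ((1-x)^(β-1/2) * (1+x)^(β-1/2)) := by
                apply mul_le_mul_of_nonneg_left _ hc
                exact mul_le_mul_of_nonneg_left hlox h1mx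
      _ = ENNReal.ofReal (β * (m * (a^2:ℝ)^(β-1:ℝ)) / Real.pi) * volume (Set.Ioo (-(a/2)) (a/2)) := by
          rw [Real.volume_Ioo, ← ENNReal.ofReal_mul (by positivity)]
          congr 1
          ring
      _ = ∫⁻ _ in Set.Ioo (-(a/2)) (a/2), ENNReal.ofReal (β * (m * (a^2:ℝ)^(β-1:ℝ)) / Real.pi) := by
          rw [setLIntegral_const]
      _ ≤ ∫⁻ y in Set.Ioo (-(a/2)) (a/2), ENNReal.ofReal (β * (1 - (x^2+y^2))^(β-1) / Real.pi) := by
          apply setLIntegral_mono hmeas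
          intro y hy
          apply ENNReal.ofReal_le_ofReal
          rw [hrw y]
          have hd := ptw_lower hβ ha hy
          gcongr
      _ ≤ ∫⁻ y in Set.Ioo (-a) a, ENNReal.ofReal (β * (1 - (x^2+y^2))^(β-1) / Real.pi) :=
          lintegral_mono_set hsub
  · -- UPPER BOUND
    have hC1 : (0:ℝ) ≤ β * M * a^(β-1:ℝ) / Real.pi := by positivity
    calc (∫⁻ y in Set.Ioo (-a) a, ENNReal.ofReal (β * (1 - (x^2+y^2))^(β-1) / Real.pi))
        ≤ ∫⁻ y in Set.Ioo (-a) a,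
            (ENNReal.ofReal ((β * M * a^(β-1:ℝ) / Real.pi) * (a-y)^(β-1:ℝ))
             + ENNReal.ofReal ((β * M * a^(β-1:ℝ) / Real.pi) * (y - -a)^(β-1:ℝ))) := by
          apply setLIntegral_mono (by fun_prop)
          intro y hy
          rw [hrw y]
          refine le_trans (ENNReal.ofReal_le_ofReal ?_) (ENNReal.ofReal_add_le)
          have := ptw_upper hβ ha hy
          have e : y - -a = a + y := by ring
          rw [e]
          calc β * (a^2-y^2)^(β-1) / Real.pi
              ≤ β * ((M * a^(β-1:ℝ)) * ((a-y)^(β-1:ℝ) + (a+y)^(β-1:ℝ))) / Real.pi := by gcongr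
            _ = β * M * a^(β-1:ℝ) / Real.pi * (a-y)^(β-1:ℝ)
                + β * M * a^(β-1:ℝ) / Real.pi * (a+y)^(β-1:ℝ) := by ring
      _ = (∫⁻ y in Set.Ioo (-a) a, ENNReal.ofReal ((β * M * a^(β-1:ℝ) / Real.pi) * (a-y)^(β-1:ℝ)))
          + (∫⁻ y in Set.Ioo (-a) a, ENNReal.ofReal ((β * M * a^(β-1:ℝ) / Real.pi) * (y - -a)^(β-1:ℝ))) := by
          rw [lintegral_add_left (by fun_prop)]
      _ = ENNReal.ofReal (β * M * a^(β-1:ℝ) / Real.pi) *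
            ((∫⁻ y in Set.Ioo (-a) a, ENNReal.ofReal ((a-y)^(β-1:ℝ)))
             + (∫⁻ y in Set.Ioo (-a) a, ENNReal.ofReal ((y - -a)^(β-1:ℝ)))) := by
          rw [mul_add]
          congr 1
          · simp_rw [ENNReal.ofReal_mul hC1]
            rw [lintegral_const_mul _ (by fun_prop)]
          · simp_rw [ENNReal.ofReal_mul hC1]
            rw [lintegral_const_mul _ (by fun_prop)]
      _ = ENNReal.ofReal (β * M * a^(β-1:ℝ) / Real.pi) *
            (ENNReal.ofReal ((a - -a)^(β-1+1:ℝ) / (β-1+1)) + ENNReal.ofReal ((a - -a)^(β-1+1:ℝ) / (β-1+1))) := by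
          rw [lint_rpow_right (-a) a (by linarith) (by linarith),
            lint_rpow_left (-a) a (by linarith) (by linarith)]
      _ ≤ ENNReal.ofReal (2 * 2^(β:ℝ) * M * M₂ / Real.pi * (1-x)^(β-1/2)) := by
          rw [← two_mul, ← ENNReal.ofReal_ofNat, ← ENNReal.ofReal_mul (by norm_num),
            ← ENNReal.ofReal_mul hC1]
          apply ENNReal.ofReal_le_ofReal
          have e1 : a - -a = 2*a := by ring
          have e2 : β - 1 + 1 = β := by ring
          rw [e1, e2, Real.mul_rpow (by norm_num) ha.le]
          have e4 : β * M * a^(β-1:ℝ) / Real.pi * (2 * (2^(β:ℝ) * a^(β:ℝ) / β))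
              = (2 * 2^(β:ℝ) * M / Real.pi) * (a^(β-1:ℝ) * a^(β:ℝ)) := by
            field_simp
          rw [e4, he3]
          calc (2 * 2^(β:ℝ) * M / Real.pi) * ((1-x)^(β-1/2:ℝ) * (1+x)^(β-1/2:ℝ))
              ≤ (2 * 2^(β:ℝ) * M / Real.pi) * ((1-x)^(β-1/2:ℝ) * M₂) := by
                apply mul_le_mul_of_nonneg_left _ (by positivity)
                exact mul_le_mul_of_nonneg_left hupx h1mx
            _ = 2 * 2^(β:ℝ) * M * M₂ / Real.pi * (1-x)^(β-1/2) := by ring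


/-- The probability measure on the open unit disc with density `β(1-|z|²)^{β-1}` with
respect to the area measure normalized so that the unit disc has measure 1
(i.e. Lebesgue measure divided by `π`). -/
noncomputable def mB (β : ℝ) : Measure ℂ :=
  (volume.restrict {z : ℂ | ‖z‖ < 1}).withDensity
    (fun z => ENNReal.ofReal (β * (1 - ‖z‖ ^ 2) ^ (β - 1) / Real.pi))

private lemma reduce (β ε : ℝ) (hε : 0 < ε) (hε1 : ε ≤ 1) :
    mB β {z : ℂ | ‖z‖ < 1 ∧ (1 - z).re < ε} =
      ∫⁻ x : ℝ, (Set.Ioo (1-ε) 1).indicator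
        (fun x => ∫⁻ y in Set.Ioo (-(Real.sqrt (1-x^2))) (Real.sqrt (1-x^2)),
          ENNReal.ofReal (β * (1 - (x^2+y^2))^(β-1) / Real.pi)) x := by
  set G : ℝ × ℝ → ENNReal :=
    fun p => ENNReal.ofReal (β * (1 - (p.1^2+p.2^2))^(β-1) / Real.pi) with hGdef
  have hG : Measurable G := by fun_prop
  set T : Set (ℝ × ℝ) := {p | p.1^2+p.2^2 < 1 ∧ 1 - p.1 < ε} with hTdef
  have hT : MeasurableSet T := by
    rw [hTdef, Set.setOf_and]
    exact (measurableSet_lt (by fun_prop) measurable_const).inter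
      (measurableSet_lt (by fun_prop) measurable_const)
  set S : Set ℂ := {z : ℂ | ‖z‖ < 1 ∧ (1 - z).re < ε} with hSdef
  have hS : MeasurableSet S := by
    rw [hSdef, Set.setOf_and]
    exact (measurableSet_lt (by fun_prop) measurable_const).inter
      (measurableSet_lt (by fun_prop) measurable_const)
  have hnorm : ∀ z : ℂ, ‖z‖^2 = z.re^2 + z.im^2 := by
    intro z
    rw [← Complex.normSq_eq_norm_sq, Complex.normSq_apply]; ring
  have step1 : mB β S = ∫⁻ z in S, G (Complex.measurableEquivRealProd z) ∂volume := by
    rw [mB, withDensity_apply _ hS, Measure.restrict_restrict hS,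
      Set.inter_eq_left.mpr (fun z hz => hz.1)]
    apply lintegral_congr
    intro z
    have : Complex.measurableEquivRealProd z = (z.re, z.im) := by
      simp [Complex.measurableEquivRealProd]
    rw [this, hGdef]
    simp only []
    rw [hnorm z]
  have himg : Complex.measurableEquivRealProd '' S = T := by
    rw [MeasurableEquiv.image_eq_preimage_symm]
    ext p
    have hre : (Complex.measurableEquivRealProd.symm p).re = p.1 := by
      simp [Complex.measurableEquivRealProd]
    have him : (Complex.measurableEquivRealProd.symm p).im = p.2 := by
      simp [Complex.measurableEquivRealProd]
    simp only [Set.mem_preimage, hSdef, hTdef, Set.mem_setOf_eq, Complex.sub_re,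
      Complex.one_re, hre]
    constructor
    · rintro ⟨h1, h2⟩
      refine ⟨?_, h2⟩
      have := hnorm (Complex.measurableEquivRealProd.symm p)
      rw [hre, him] at this
      nlinarith [norm_nonneg (Complex.measurableEquivRealProd.symm p)]
    · rintro ⟨h1, h2⟩
      refine ⟨?_, h2⟩
      have := hnorm (Complex.measurableEquivRealProd.symm p)
      rw [hre, him] at this
      nlinarith [norm_nonneg (Complex.measurableEquivRealProd.symm p)]
  rw [step1,
    Complex.volume_preserving_equiv_real_prod.setLIntegral_comp_emb
      Complex.measurableEquivRealProd.measurableEmbedding G S,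
    himg, ← lintegral_indicator hT, Measure.volume_eq_prod,
    lintegral_prod _ (hG.indicator hT).aemeasurable]
  apply lintegral_congr
  intro x
  have hind : ∀ y : ℝ, T.indicator G (x, y) =
      ({y : ℝ | x^2+y^2 < 1 ∧ 1 - x < ε}).indicator (fun y => G (x, y)) y := by
    intro y
    simp only [Set.indicator_apply, hTdef, Set.mem_setOf_eq]
  simp_rw [hind]
  have hY : MeasurableSet {y : ℝ | x^2+y^2 < 1 ∧ 1 - x < ε} := by
    rw [Set.setOf_and]
    exact (measurableSet_lt (by fun_prop) measurable_const).inter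
      (MeasurableSet.const _)
  rw [lintegral_indicator hY]
  by_cases hx : x ∈ Set.Ioo (1-ε) 1
  · rw [Set.indicator_of_mem hx]
    obtain ⟨hx1, hx2⟩ := hx
    have hx0 : 0 < x := by linarith
    have hx3 : 0 < 1 - x^2 := by nlinarith
    have ha2 : (Real.sqrt (1-x^2))^2 = 1-x^2 := Real.sq_sqrt hx3.le
    have ha : 0 < Real.sqrt (1-x^2) := Real.sqrt_pos.mpr hx3
    have hYeq : {y : ℝ | x^2+y^2 < 1 ∧ 1 - x < ε} =
        Set.Ioo (-(Real.sqrt (1-x^2))) (Real.sqrt (1-x^2)) := by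
      ext y
      simp only [Set.mem_setOf_eq, Set.mem_Ioo]
      constructor
      · rintro ⟨h1, _⟩
        constructor <;> nlinarith
      · rintro ⟨h1, h2⟩
        exact ⟨by nlinarith, by linarith⟩
    rw [hYeq]
  · rw [Set.indicator_of_notMem hx]
    have hYeq : {y : ℝ | x^2+y^2 < 1 ∧ 1 - x < ε} = (∅ : Set ℝ) := by
      ext y
      simp only [Set.mem_setOf_eq, Set.mem_empty_iff_false, iff_false, not_and]
      intro h1
      rw [Set.mem_Ioo, not_and_or] at hx
      rcases hx with hx | hx
      · push_neg at hx; linarith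
      · push_neg at hx; nlinarith
    rw [hYeq]
    simp

theorem stmt11 (β : ℝ) (hβ : 0 < β) :
    ∃ c C : ℝ, 0 < c ∧ 0 < C ∧ ∀ ε : ℝ, 0 < ε → ε ≤ 1 →
      ENNReal.ofReal (c * ε ^ (β + 1/2)) ≤ mB β {z : ℂ | ‖z‖ < 1 ∧ (1 - z).re < ε} ∧
      mB β {z : ℂ | ‖z‖ < 1 ∧ (1 - z).re < ε} ≤ ENNReal.ofReal (C * ε ^ (β + 1/2)) := by
  obtain ⟨k₁, k₂, hk₁, hk₂, hbd⟩ := inner_bd β hβ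
  have hp : (-1:ℝ) < β - 1/2 := by linarith
  have hb2 : (0:ℝ) < β + 1/2 := by linarith
  have hexp : β - 1/2 + 1 = β + 1/2 := by ring
  refine ⟨k₁/(β+1/2), k₂/(β+1/2), by positivity, by positivity, fun ε hε hε1 => ?_⟩
  have hmeas1 : Measurable (fun x : ℝ => ENNReal.ofReal ((1-x)^(β-1/2:ℝ))) := by fun_prop
  have hIoo : MeasurableSet (Set.Ioo (1-ε) (1:ℝ)) := measurableSet_Ioo
  have hsubset : Set.Ioo (1-ε) (1:ℝ) ⊆ Set.Ioo 0 1 :=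
    Set.Ioo_subset_Ioo (by linarith) le_rfl
  have key : ∀ k : ℝ, 0 ≤ k →
      ∫⁻ x : ℝ, (Set.Ioo (1-ε) 1).indicator
        (fun x => ENNReal.ofReal (k * (1-x)^(β-1/2:ℝ))) x
      = ENNReal.ofReal (k/(β+1/2) * ε^(β+1/2:ℝ)) := by
    intro k hk
    rw [lintegral_indicator hIoo]
    simp_rw [ENNReal.ofReal_mul hk]
    rw [lintegral_const_mul _ hmeas1, lint_rpow_right (1-ε) 1 hp (by linarith),
      ← ENNReal.ofReal_mul hk]
    congr 1
    rw [show (1:ℝ) - (1-ε) = ε by ring, hexp]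
    ring
  rw [reduce β ε hε hε1]
  constructor
  · rw [← key k₁ hk₁.le]
    apply lintegral_mono
    intro x
    by_cases hx : x ∈ Set.Ioo (1-ε) (1:ℝ)
    · rw [Set.indicator_of_mem hx, Set.indicator_of_mem hx]
      exact (hbd x (hsubset hx)).1
    · rw [Set.indicator_of_notMem hx, Set.indicator_of_notMem hx]
  · rw [← key k₂ hk₂.le]
    apply lintegral_mono
    intro x
    by_cases hx : x ∈ Set.Ioo (1-ε) (1:ℝ)
    · rw [Set.indicator_of_mem hx, Set.indicator_of_mem hx]
      exact (hbd x (hsubset hx)).2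
    · rw [Set.indicator_of_notMem hx, Set.indicator_of_notMem hx]
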